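/- Let p be a prime, r ≥ 1 and k ≥ 1 integers, and let Γ be a finite cyclic group with generator γ. Let u ∈ GL_r(Z_p). Regard u^{−k} as an element of M_r(Z_p[Γ]) and let γ·u^{−k} ∈ M_r(Z_p[Γ]) have (i,j) entry γ·(u^{−k})_{ij}. Then the determinant det( p^k·1 − γ·u^{−k} ), computed in the commutative ring Z_p[Γ], is a unit of Z_p[Γ]. -/

import Mathlib

/-- For a finite cyclic group `Γ` with generator `γ`, `u ∈ GL_r(ℤ_p)` and
`k ≥ 1`, the determinant `det(p^k·1 − γ·u^{−k})`, computed in the commutative ring `ℤ_p[Γ]`,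
is a unit of `ℤ_p[Γ]`. -/

theorem det_pPow_sub_gamma_uInvPow_isUnit
    {p : ℕ} [Fact p.Prime] {r k : ℕ} (hr : 1 ≤ r) (hk : 1 ≤ k)
    {Γ : Type*} [CommGroup Γ] [Finite Γ] (γ : Γ) (hgen : Subgroup.zpowers γ = ⊤)
    (u : Matrix.GeneralLinearGroup (Fin r) ℤ_[p])
    (W : Matrix (Fin r) (Fin r) (MonoidAlgebra ℤ_[p] Γ))
    (hW : ∀ i j, W i j
      = MonoidAlgebra.single γ
          (((u⁻¹ ^ k : Matrix.GeneralLinearGroup (Fin r) ℤ_[p]) : Matrix (Fin r) (Fin r) ℤ_[p]) i j)) :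
    IsUnit ((((p : MonoidAlgebra ℤ_[p] Γ)) ^ k • (1 : Matrix (Fin r) (Fin r) (MonoidAlgebra ℤ_[p] Γ)) - W).det) := by
  classical
  have hfin : Module.Finite ℤ_[p] (MonoidAlgebra ℤ_[p] Γ) :=
    Module.Finite.equiv (MonoidAlgebra.coeffLinearEquiv (R := ℤ_[p])).symm
  have hint : Algebra.IsIntegral ℤ_[p] (MonoidAlgebra ℤ_[p] Γ) := Algebra.IsIntegral.of_finite _ _
  -- `p` lies in the Jacobson radical of `ℤ_p[Γ]`
  have hpJ : (p : MonoidAlgebra ℤ_[p] Γ) ∈ Ideal.jacobson (⊥ : Ideal (MonoidAlgebra ℤ_[p] Γ)) := by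
    rw [Ideal.jacobson]
    refine Ideal.mem_sInf.2 ?_
    rintro J ⟨-, hJ⟩
    haveI := hJ
    have hmax : (J.comap (algebraMap ℤ_[p] (MonoidAlgebra ℤ_[p] Γ))).IsMaximal :=
      Ideal.isMaximal_comap_of_isIntegral_of_isMaximal J
    have heq : J.comap (algebraMap ℤ_[p] (MonoidAlgebra ℤ_[p] Γ)) = IsLocalRing.maximalIdeal ℤ_[p] :=
      IsLocalRing.eq_maximalIdeal hmax
    have hpm : (p : ℤ_[p]) ∈ J.comap (algebraMap ℤ_[p] (MonoidAlgebra ℤ_[p] Γ)) := by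
      rw [heq, IsLocalRing.mem_maximalIdeal]
      exact PadicInt.p_nonunit
    have := Ideal.mem_comap.1 hpm
    rwa [map_natCast] at this
  have hpkJ : (p : MonoidAlgebra ℤ_[p] Γ) ^ k ∈ Ideal.jacobson (⊥ : Ideal (MonoidAlgebra ℤ_[p] Γ)) := by
    obtain ⟨k, rfl⟩ := Nat.exists_eq_add_of_le hk
    rw [pow_add, pow_one]
    exact Ideal.mul_mem_right _ _ hpJ
  set J := Ideal.jacobson (⊥ : Ideal (MonoidAlgebra ℤ_[p] Γ)) with hJdef
  set f := Ideal.Quotient.mk J with hfdef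
  set M : Matrix (Fin r) (Fin r) ℤ_[p] :=
    ((u⁻¹ ^ k : Matrix.GeneralLinearGroup (Fin r) ℤ_[p]) : Matrix (Fin r) (Fin r) ℤ_[p]) with hMdef
  have hWeq : W = (MonoidAlgebra.of ℤ_[p] Γ γ) • (M.map (algebraMap ℤ_[p] (MonoidAlgebra ℤ_[p] Γ))) := by
    refine Matrix.ext fun i j => ?_
    rw [Matrix.smul_apply, Matrix.map_apply, hW i j, MonoidAlgebra.single_eq_algebraMap_mul_of,
      smul_eq_mul, mul_comm]
  have hMdet : IsUnit M.det := by
    have : IsUnit M := (u⁻¹ ^ k).isUnit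
    exact (Matrix.isUnit_iff_isUnit_det _).1 this
  have hWdet : IsUnit W.det := by
    rw [hWeq, Matrix.det_smul]
    refine (((Group.isUnit γ).map (MonoidAlgebra.of ℤ_[p] Γ)).pow _).mul ?_
    rw [← RingHom.mapMatrix_apply, ← RingHom.map_det]
    exact hMdet.map (algebraMap ℤ_[p] (MonoidAlgebra ℤ_[p] Γ))
  have hf0 : f ((p : MonoidAlgebra ℤ_[p] Γ) ^ k) = 0 := Ideal.Quotient.eq_zero_iff_mem.2 hpkJ
  have hmap : ((p : MonoidAlgebra ℤ_[p] Γ) ^ k •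
      (1 : Matrix (Fin r) (Fin r) (MonoidAlgebra ℤ_[p] Γ)) - W).map f = -(W.map f) := by
    refine Matrix.ext fun i j => ?_
    simp only [Matrix.map_apply, Matrix.sub_apply, Matrix.smul_apply, Matrix.one_apply,
      Matrix.neg_apply, map_sub, smul_eq_mul, map_mul, hf0, zero_mul, zero_sub]
  have hquot : IsUnit (f (((p : MonoidAlgebra ℤ_[p] Γ) ^ k •
      (1 : Matrix (Fin r) (Fin r) (MonoidAlgebra ℤ_[p] Γ)) - W).det)) := by
    rw [RingHom.map_det, RingHom.mapMatrix_apply, hmap, Matrix.det_neg,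
      ← RingHom.mapMatrix_apply, ← RingHom.map_det]
    exact ((isUnit_one.neg).pow _).mul (hWdet.map f)
  obtain ⟨v, hv⟩ := hquot
  obtain ⟨y, hy⟩ := Ideal.Quotient.mk_surjective (I := J) ↑v⁻¹
  set D := ((p : MonoidAlgebra ℤ_[p] Γ) ^ k •
      (1 : Matrix (Fin r) (Fin r) (MonoidAlgebra ℤ_[p] Γ)) - W).det with hD
  have hDy : f (D * y) = 1 := by
    rw [map_mul, hy, ← hv, Units.mul_inv]
  have hmem : D * y - 1 ∈ J := by
    rw [← Ideal.Quotient.eq_zero_iff_mem, map_sub, hDy, map_one, sub_self]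
  have hunit : IsUnit (D * y) := Ideal.isUnit_of_sub_one_mem_jacobson_bot _ hmem
  exact isUnit_of_mul_isUnit_left hunit
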